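/- Let f : ℕ → ℝ be positive, non-increasing, eventually convex (there is k₀ such that f(k+2) − f(k+1) ≥ f(k+1) − f(k) for all k ≥ k₀), and suppose the infimum L of {f(n) : n ≥ 1} satisfies L > 0. Define the rank-discounted value V_f(X) = Σ_{k=1}^{|X|} f(k)·X_k. Let Z₀ be a fixed population, and let X and Y be populations that are moderate with respect to Z₀, meaning that for every w with X(w) ≠ 0 (respectively Y(w) ≠ 0) there is z ≤ w with Z₀(z) ≠ 0. If Tot(X) > Tot(Y), then there exists N ∈ ℕ such that V_f(X + n·Z₀) > V_f(Y + n·Z₀) for every integer n ≥ N. -/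

import Mathlib

/-- The size of a population: total number of welfare subjects. -/
noncomputable def psize (X : ℝ →₀ ℕ) : ℕ := X.sum fun _ n => n

/-- Total welfare of a population. -/
noncomputable def ptot (X : ℝ →₀ ℕ) : ℝ := X.sum fun w n => (n : ℝ) * w

/-- The welfare levels of a population, with multiplicity, sorted in increasing order.
The `k`-th worst-off individual (1-indexed) has welfare `(ranked X).getD (k-1) 0`. -/
noncomputable def ranked (X : ℝ →₀ ℕ) : List ℝ :=
  (Finsupp.toMultiset X).sort (· ≤ ·)

/-- Rank-discounted value: `Σ_{k=1}^{|X|} f(k) · X_k`, where `X_k` is the `k`-th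
smallest welfare level of `X` counted with multiplicity. -/
noncomputable def vrd (f : ℕ → ℝ) (X : ℝ →₀ ℕ) : ℝ :=
  ∑ k ∈ Finset.range (ranked X).length, f (k + 1) * (ranked X).getD k 0

private lemma getD_mem_of_lt {l : List ℝ} {k : ℕ} (hk : k < l.length) : l.getD k 0 ∈ l := by
  rw [List.getD_eq_getElem l 0 hk]; exact List.getElem_mem hk

private lemma sorted_getD_iff (p : ℝ → Bool)
    (hp : ∀ y z : ℝ, y ≤ z → p z = true → p y = true) :
    ∀ (l : List ℝ), l.Pairwise (· ≤ ·) → ∀ k : ℕ, k < l.length →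
      (p (l.getD k 0) = true ↔ k < l.countP p) := by
  intro l
  induction l with
  | nil => intro _ k hk; simp at hk
  | cons x t ih =>
    intro hl k hk
    have hs : t.Pairwise (· ≤ ·) := hl.of_cons
    have hx : ∀ y ∈ t, x ≤ y := (List.pairwise_cons.mp hl).1
    match k with
    | 0 =>
      simp only [List.getD_cons_zero]
      constructor
      · intro h
        exact List.countP_pos_iff.mpr ⟨x, List.mem_cons_self, h⟩
      · intro h
        obtain ⟨y, hy, hpy⟩ := List.countP_pos_iff.mp h
        rcases List.mem_cons.mp hy with rfl | hyt
        · exact hpy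
        · exact hp x y (hx y hyt) hpy
    | (k+1) =>
      have hk' : k < t.length := by simpa using Nat.lt_of_succ_lt_succ (by simpa using hk)
      rw [List.getD_cons_succ, List.countP_cons]
      by_cases hpx : p x = true
      · rw [if_pos hpx, ih hs k hk']
        omega
      · rw [if_neg hpx]
        have hct : t.countP p = 0 := by
          rw [List.countP_eq_zero]
          intro y hy hpy
          exact hpx (hp x y (hx y hy) hpy)
        have hgd : ¬ p (t.getD k 0) = true := by
          intro h
          exact hpx (hp x _ (hx _ (getD_mem_of_lt hk')) h)
        constructor
        · intro h; exact absurd h hgd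
        · intro h; omega

private lemma countP_mono_mem {p q : ℝ → Prop} [DecidablePred p] [DecidablePred q]
    (s : Multiset ℝ) (h : ∀ x ∈ s, p x → q x) : s.countP p ≤ s.countP q := by
  induction s using Multiset.induction_on with
  | empty => simp
  | cons a s ih =>
    rw [Multiset.countP_cons, Multiset.countP_cons]
    have hih := ih (fun x hx => h x (Multiset.mem_cons_of_mem hx))
    by_cases hpa : p a
    · have := h a (Multiset.mem_cons_self a s) hpa
      simp only [hpa, this, if_true]
      omega
    · simp only [hpa, if_false]
      split_ifs <;> omega

private lemma psize_eq_card (W : ℝ →₀ ℕ) : psize W = Multiset.card (Finsupp.toMultiset W) := by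
  rw [Finsupp.card_toMultiset]; rfl

private lemma length_ranked (W : ℝ →₀ ℕ) : (ranked W).length = psize W := by
  rw [ranked, Multiset.length_sort, psize_eq_card]

private lemma psize_add_nsmul (X Z : ℝ →₀ ℕ) (n : ℕ) :
    psize (X + n • Z) = psize X + n * psize Z := by
  simp only [psize_eq_card, map_add, map_nsmul, Multiset.card_add, Multiset.card_nsmul, smul_eq_mul]

private lemma ptot_eq_sum (W : ℝ →₀ ℕ) : ptot W = (Finsupp.toMultiset W).sum := by
  induction W using Finsupp.induction with
  | zero => simp [ptot]
  | single_add a n f hfa hn ih =>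
    have h1 : ptot ((Finsupp.single a n) + f) = ptot (Finsupp.single a n) + ptot f := by
      classical
      simp only [ptot]
      rw [Finsupp.sum_add_index] <;> intros <;> push_cast <;> ring
    rw [h1, map_add, Multiset.sum_add, ← ih, Finsupp.toMultiset_single,
      Multiset.nsmul_singleton, Multiset.sum_replicate, ptot, Finsupp.sum_single_index] <;>
      simp [nsmul_eq_mul]

private lemma ptot_add_nsmul (X Z : ℝ →₀ ℕ) (n : ℕ) :
    ptot (X + n • Z) = ptot X + n * ptot Z := by
  simp only [ptot_eq_sum, map_add, map_nsmul, Multiset.sum_add, Multiset.sum_nsmul,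
    nsmul_eq_mul]

private lemma sum_ranked (W : ℝ →₀ ℕ) : (ranked W).sum = ptot W := by
  rw [ptot_eq_sum, ranked, ← Multiset.sum_coe, Multiset.sort_eq]

private lemma sum_range_getD (l : List ℝ) :
    ∑ k ∈ Finset.range l.length, l.getD k 0 = l.sum := by
  induction l with
  | nil => simp
  | cons x t ih =>
    rw [List.length_cons, Finset.sum_range_succ']
    simp only [List.getD_cons_succ, List.getD_cons_zero, List.sum_cons, ih]
    ring

private lemma countP_ranked (W : ℝ →₀ ℕ) (p : ℝ → Prop) [DecidablePred p] :
    (ranked W).countP (fun x => decide (p x)) = Multiset.countP p (Finsupp.toMultiset W) := by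
  rw [ranked, ← Multiset.coe_countP, Multiset.sort_eq]

private lemma cnt_add_nsmul (X Z : ℝ →₀ ℕ) (n : ℕ) (p : ℝ → Prop) [DecidablePred p] :
    Multiset.countP p (Finsupp.toMultiset (X + n • Z)) =
      Multiset.countP p (Finsupp.toMultiset X) + n * Multiset.countP p (Finsupp.toMultiset Z) := by
  rw [map_add, map_nsmul, Multiset.countP_add, Multiset.countP_nsmul]

private lemma getD_eq_of_counts (W : ℝ →₀ ℕ) (k : ℕ) (w : ℝ)
    (h1 : Multiset.countP (· < w) (Finsupp.toMultiset W) ≤ k)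
    (h2 : k < Multiset.countP (· ≤ w) (Finsupp.toMultiset W)) :
    (ranked W).getD k 0 = w := by
  have hlen : k < (ranked W).length := by
    rw [length_ranked, psize_eq_card]
    exact lt_of_lt_of_le h2 (Multiset.countP_le_card _ _)
  have hsorted : (ranked W).Pairwise (· ≤ ·) := Multiset.pairwise_sort _ _
  have hle : (ranked W).getD k 0 ≤ w := by
    have hiff := sorted_getD_iff (fun x => decide (x ≤ w))
      (by intro y z hyz hz; simp only [decide_eq_true_eq] at *; exact le_trans hyz hz)
      (ranked W) hsorted k hlen
    rw [countP_ranked W (· ≤ w)] at hiff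
    simpa using hiff.mpr h2
  have hge : ¬ ((ranked W).getD k 0 < w) := by
    intro hlt
    have hiff := sorted_getD_iff (fun x => decide (x < w))
      (by intro y z hyz hz; simp only [decide_eq_true_eq] at *; exact lt_of_le_of_lt hyz hz)
      (ranked W) hsorted k hlen
    rw [countP_ranked W (· < w)] at hiff
    have := hiff.mp (by simpa using hlt)
    omega
  linarith [lt_or_ge ((ranked W).getD k 0) w, le_antisymm hle]

set_option maxHeartbeats 1000000 in
theorem stmt_13 (f : ℕ → ℝ)
    (hpos : ∀ n : ℕ, n ≥ 1 → 0 < f n)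
    (hmono : ∀ k, f (k + 1) ≤ f k)
    (hconv : ∃ k₀ : ℕ, ∀ k ≥ k₀, f (k + 2) - f (k + 1) ≥ f (k + 1) - f k)
    (L : ℝ) (hL : IsGLB (Set.range fun n : ℕ => f (n + 1)) L) (hLpos : 0 < L)
    (Z₀ : ℝ →₀ ℕ) (hZ₀ : Z₀ ≠ 0)
    (X Y : ℝ →₀ ℕ) (hX : X ≠ 0) (hY : Y ≠ 0)
    (hXmod : ∀ w : ℝ, X w ≠ 0 → ∃ z ≤ w, Z₀ z ≠ 0)
    (hYmod : ∀ w : ℝ, Y w ≠ 0 → ∃ z ≤ w, Z₀ z ≠ 0)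
    (htot : ptot X > ptot Y) :
    ∃ N : ℕ, ∀ n : ℕ, n ≥ N → vrd f (X + n • Z₀) > vrd f (Y + n • Z₀) := by
  classical
  have hfanti : Antitone f := antitone_nat_of_succ_le hmono
  set g : ℕ → ℝ := fun k => f k - L with hg
  have hgnn : ∀ k, 0 ≤ g k := by
    intro k
    have h1 : L ≤ f (k + 1) := hL.1 ⟨k, rfl⟩
    have h2 := hmono k
    simp only [hg]; linarith
  have hganti : ∀ j k : ℕ, j ≤ k → g k ≤ g j := by
    intro j k h
    simp only [hg]
    linarith [hfanti h]
  -- support bound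
  set S : Finset ℝ := X.support ∪ Y.support ∪ Z₀.support with hSdef
  set M : ℝ := ∑ w ∈ S, |w| with hM
  have hM0 : 0 ≤ M := Finset.sum_nonneg fun _ _ => abs_nonneg _
  have hmemM : ∀ w ∈ S, |w| ≤ M := fun w hw =>
    Finset.single_le_sum (f := fun w => |w|) (fun _ _ => abs_nonneg _) hw
  have hsubX : X.support ⊆ S := by
    intro w hw
    rw [hSdef, Finset.mem_union, Finset.mem_union]
    exact Or.inl (Or.inl hw)
  have hsubY : Y.support ⊆ S := by
    intro w hw
    rw [hSdef, Finset.mem_union, Finset.mem_union]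
    exact Or.inl (Or.inr hw)
  have hsubZ : Z₀.support ⊆ S := by
    intro w hw
    rw [hSdef, Finset.mem_union]
    exact Or.inr hw
  have hvb : ∀ (W : ℝ →₀ ℕ), W.support ⊆ S → ∀ (n : ℕ) (k : ℕ),
      |(ranked (W + n • Z₀)).getD k 0| ≤ M := by
    intro W hWsub n k
    by_cases hk : k < (ranked (W + n • Z₀)).length
    · have hmem := getD_mem_of_lt hk
      rw [ranked, Multiset.mem_sort, Finsupp.mem_toMultiset] at hmem
      have hmem2 := Finsupp.support_add hmem
      rw [Finset.mem_union] at hmem2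
      rcases hmem2 with h | h
      · exact hmemM _ (hWsub h)
      · exact hmemM _ (hsubZ (Finsupp.support_smul h))
    · rw [List.getD_eq_default _ _ (le_of_not_gt hk)]
      simpa using hM0
  have hsuppne : Z₀.support.Nonempty := Finsupp.support_nonempty_iff.mpr hZ₀
  have hm1 : 1 ≤ psize Z₀ := by
    rw [psize_eq_card, Nat.succ_le_iff]
    apply Multiset.card_pos_iff_exists_mem.mpr
    obtain ⟨w, hw⟩ := hsuppne
    exact ⟨w, (Finsupp.mem_toMultiset _ _).mpr hw⟩
  have hcZle1 : ∀ w ∈ Z₀.support, 1 ≤ Multiset.countP (· ≤ w) (Finsupp.toMultiset Z₀) := by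
    intro w hw
    rw [Nat.succ_le_iff]
    exact Multiset.countP_pos.mpr ⟨w, (Finsupp.mem_toMultiset _ _).mpr hw, le_refl w⟩
  -- moderateness: no elements strictly below a level with no smaller Z₀-support
  have hnolow : ∀ w : ℝ, (∀ z ∈ Z₀.support, ¬ z < w) →
      Multiset.countP (· < w) (Finsupp.toMultiset X) = 0 ∧
      Multiset.countP (· < w) (Finsupp.toMultiset Y) = 0 ∧
      Multiset.countP (· < w) (Finsupp.toMultiset Z₀) = 0 := by
    intro w hw
    refine ⟨?_, ?_, ?_⟩ <;> apply Multiset.countP_eq_zero.mpr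
    · intro x hx hxw
      rw [Finsupp.mem_toMultiset, Finsupp.mem_support_iff] at hx
      obtain ⟨z, hz1, hz2⟩ := hXmod x hx
      exact hw z (Finsupp.mem_support_iff.mpr hz2) (lt_of_le_of_lt hz1 hxw)
    · intro x hx hxw
      rw [Finsupp.mem_toMultiset, Finsupp.mem_support_iff] at hx
      obtain ⟨z, hz1, hz2⟩ := hYmod x hx
      exact hw z (Finsupp.mem_support_iff.mpr hz2) (lt_of_le_of_lt hz1 hxw)
    · intro z hz hzw
      rw [Finsupp.mem_toMultiset] at hz
      exact hw z hz hzw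
  -- key: identify common values of the two merged rankings
  have hkey : ∀ (n k : ℕ) (w : ℝ), w ∈ Z₀.support →
      Multiset.countP (· < w) (Finsupp.toMultiset X)
        + Multiset.countP (· < w) (Finsupp.toMultiset Y)
        + n * Multiset.countP (· < w) (Finsupp.toMultiset Z₀) ≤ k →
      k + 1 ≤ n * Multiset.countP (· ≤ w) (Finsupp.toMultiset Z₀) →
      (ranked (X + n • Z₀)).getD k 0 = w ∧ (ranked (Y + n • Z₀)).getD k 0 = w := by
    intro n k w hw h1 h2
    constructor
    · apply getD_eq_of_counts
      · rw [cnt_add_nsmul]; omega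
      · rw [cnt_add_nsmul]; omega
    · apply getD_eq_of_counts
      · rw [cnt_add_nsmul]; omega
      · rw [cnt_add_nsmul]; omega
  -- indices where rankings differ lie near block boundaries
  have hbad : ∀ n k : ℕ, k < n * psize Z₀ →
      (ranked (X + n • Z₀)).getD k 0 ≠ (ranked (Y + n • Z₀)).getD k 0 →
      ∃ w ∈ Z₀.support, n * Multiset.countP (· ≤ w) (Finsupp.toMultiset Z₀) ≤ k ∧
        k < n * Multiset.countP (· ≤ w) (Finsupp.toMultiset Z₀) + (psize X + psize Y) := by
    intro n k hk hne
    set F := Z₀.support.filter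
      (fun w => k < n * Multiset.countP (· ≤ w) (Finsupp.toMultiset Z₀)) with hF
    have hFne : F.Nonempty := by
      refine ⟨Z₀.support.max' hsuppne, ?_⟩
      rw [hF, Finset.mem_filter]
      refine ⟨Z₀.support.max'_mem hsuppne, ?_⟩
      have hcm : Multiset.countP (· ≤ Z₀.support.max' hsuppne) (Finsupp.toMultiset Z₀)
          = psize Z₀ := by
        rw [psize_eq_card]
        apply Multiset.countP_eq_card.mpr
        intro x hx
        exact Finset.le_max' _ x ((Finsupp.mem_toMultiset _ _).mp hx)
      rw [hcm]; exact hk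
    set w := F.min' hFne with hwdef
    have hwF : w ∈ F := F.min'_mem hFne
    rw [hF, Finset.mem_filter] at hwF
    obtain ⟨hwsupp, hwk⟩ := hwF
    have hmin : ∀ w' ∈ Z₀.support,
        k < n * Multiset.countP (· ≤ w') (Finsupp.toMultiset Z₀) → w ≤ w' := by
      intro w' h1 h2
      exact F.min'_le w' (by rw [hF, Finset.mem_filter]; exact ⟨h1, h2⟩)
    have hfail : k < Multiset.countP (· < w) (Finsupp.toMultiset X)
        + Multiset.countP (· < w) (Finsupp.toMultiset Y)
        + n * Multiset.countP (· < w) (Finsupp.toMultiset Z₀) := by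
      by_contra hcon
      push_neg at hcon
      obtain ⟨e1, e2⟩ := hkey n k w hwsupp hcon hwk
      exact hne (e1.trans e2.symm)
    by_cases hlow : ∀ z ∈ Z₀.support, ¬ z < w
    · obtain ⟨z1, z2, z3⟩ := hnolow w hlow
      rw [z1, z2, z3] at hfail
      simp only [Nat.mul_zero, Nat.add_zero, Nat.zero_add] at hfail
      omega
    · push_neg at hlow
      set F' := Z₀.support.filter (fun z => z < w) with hF'
      have hF'ne : F'.Nonempty := by
        obtain ⟨z, hz1, hz2⟩ := hlow
        exact ⟨z, by rw [hF', Finset.mem_filter]; exact ⟨hz1, hz2⟩⟩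
      set w' := F'.max' hF'ne with hw'def
      have hw'mem : w' ∈ F' := F'.max'_mem hF'ne
      rw [hF', Finset.mem_filter] at hw'mem
      obtain ⟨hw'supp, hw'lt⟩ := hw'mem
      have hcc : Multiset.countP (· < w) (Finsupp.toMultiset Z₀)
          ≤ Multiset.countP (· ≤ w') (Finsupp.toMultiset Z₀) := by
        apply countP_mono_mem
        intro x hx hxw
        apply Finset.le_max' F' x
        rw [hF', Finset.mem_filter]
        exact ⟨(Finsupp.mem_toMultiset _ _).mp hx, hxw⟩
      have hle1 : n * Multiset.countP (· ≤ w') (Finsupp.toMultiset Z₀) ≤ k := by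
        by_contra hcon
        push_neg at hcon
        exact absurd (hmin w' hw'supp hcon) (not_le.mpr hw'lt)
      have hXle : Multiset.countP (· < w) (Finsupp.toMultiset X) ≤ psize X := by
        rw [psize_eq_card]; exact Multiset.countP_le_card _ _
      have hYle : Multiset.countP (· < w) (Finsupp.toMultiset Y) ≤ psize Y := by
        rw [psize_eq_card]; exact Multiset.countP_le_card _ _
      refine ⟨w', hw'supp, hle1, ?_⟩
      have hmul : n * Multiset.countP (· < w) (Finsupp.toMultiset Z₀)
          ≤ n * Multiset.countP (· ≤ w') (Finsupp.toMultiset Z₀) :=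
        Nat.mul_le_mul_left n hcc
      omega
  -- decomposition of vrd
  have hvrd : ∀ W : ℝ →₀ ℕ, vrd f W =
      L * ptot W + ∑ k ∈ Finset.range (ranked W).length, g (k + 1) * (ranked W).getD k 0 := by
    intro W
    rw [vrd, ← sum_ranked, ← sum_range_getD, Finset.mul_sum, ← Finset.sum_add_distrib]
    apply Finset.sum_congr rfl
    intro k _
    simp only [hg]; ring
  -- choose N
  set A : ℕ := psize X + psize Y with hA
  set J : ℕ := Z₀.support.card with hJ
  set C : ℝ := M * (2 * (J : ℝ) * (A : ℝ) + (A : ℝ)) with hC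
  have hC0 : 0 ≤ C := by
    rw [hC]; positivity
  have hδ : 0 < ptot X - ptot Y := sub_pos.mpr htot
  set ε : ℝ := L * (ptot X - ptot Y) / (C + 1) with hε
  have hε0 : 0 < ε := by
    rw [hε]; positivity
  obtain ⟨q, hq⟩ : ∃ q : ℕ, f (q + 1) < L + ε := by
    by_contra hcon
    push_neg at hcon
    have hlb : L + ε ∈ lowerBounds (Set.range fun n : ℕ => f (n + 1)) := by
      rintro t ⟨q, rfl⟩
      exact hcon q
    have := hL.2 hlb
    linarith
  refine ⟨q + 1, ?_⟩
  intro n hn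
  have hgn : g n < ε := by
    have h1 : g n ≤ g (q + 1) := hganti (q + 1) n hn
    simp only [hg] at h1 ⊢
    linarith
  -- lengths
  have hlenu : (ranked (X + n • Z₀)).length = psize X + n * psize Z₀ := by
    rw [length_ranked, psize_add_nsmul]
  have hlenv : (ranked (Y + n • Z₀)).length = psize Y + n * psize Z₀ := by
    rw [length_ranked, psize_add_nsmul]
  have hMu : ∀ k, |(ranked (X + n • Z₀)).getD k 0| ≤ M := hvb X hsubX n
  have hMv : ∀ k, |(ranked (Y + n • Z₀)).getD k 0| ≤ M := hvb Y hsubY n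
  -- exceptional set
  set E : Finset ℕ := Z₀.support.biUnion
    (fun w => Finset.Ico (n * Multiset.countP (· ≤ w) (Finsupp.toMultiset Z₀))
      (n * Multiset.countP (· ≤ w) (Finsupp.toMultiset Z₀) + A)) with hE
  have hEcard : E.card ≤ J * A := by
    refine le_trans Finset.card_biUnion_le ?_
    have hcc : ∀ w ∈ Z₀.support,
        (Finset.Ico (n * Multiset.countP (· ≤ w) (Finsupp.toMultiset Z₀))
          (n * Multiset.countP (· ≤ w) (Finsupp.toMultiset Z₀) + A)).card = A := by
      intro w _
      rw [Nat.card_Ico]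
      omega
    rw [Finset.sum_congr rfl hcc, Finset.sum_const, smul_eq_mul]
  have hEge : ∀ k ∈ E, n ≤ k := by
    intro k hk
    rw [hE] at hk
    obtain ⟨w, hw, hkmem⟩ := Finset.mem_biUnion.mp hk
    have h1 := (Finset.mem_Ico.mp hkmem).1
    have h2 := hcZle1 w hw
    calc n = n * 1 := (Nat.mul_one n).symm
      _ ≤ n * Multiset.countP (· ≤ w) (Finsupp.toMultiset Z₀) := Nat.mul_le_mul_left n h2
      _ ≤ k := h1
  -- bound on the middle sum
  have hS1 : |∑ k ∈ Finset.range (n * psize Z₀),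
      g (k + 1) * ((ranked (X + n • Z₀)).getD k 0 - (ranked (Y + n • Z₀)).getD k 0)|
      ≤ ((J : ℝ) * (A : ℝ)) * (g n * (2 * M)) := by
    refine le_trans (Finset.abs_sum_le_sum_abs _ _) ?_
    rw [← Finset.sum_filter_of_ne (p := fun k =>
      (ranked (X + n • Z₀)).getD k 0 ≠ (ranked (Y + n • Z₀)).getD k 0)
      (by intro k _ h0 heq; apply h0; rw [heq]; simp)]
    have hsubE : (Finset.range (n * psize Z₀)).filter (fun k =>
        (ranked (X + n • Z₀)).getD k 0 ≠ (ranked (Y + n • Z₀)).getD k 0) ⊆ E := by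
      intro k hk
      rw [Finset.mem_filter, Finset.mem_range] at hk
      obtain ⟨w, hw, h1, h2⟩ := hbad n k hk.1 hk.2
      rw [hE]
      exact Finset.mem_biUnion.mpr ⟨w, hw, Finset.mem_Ico.mpr ⟨h1, h2⟩⟩
    refine le_trans (Finset.sum_le_sum_of_subset_of_nonneg hsubE
      (fun _ _ _ => abs_nonneg _)) ?_
    refine le_trans (Finset.sum_le_card_nsmul E _ (g n * (2 * M)) ?_) ?_
    · intro k hkE
      rw [abs_mul, abs_of_nonneg (hgnn _)]
      have hg2 : g (k + 1) ≤ g n := hganti n (k + 1) (le_trans (hEge k hkE) (Nat.le_succ k))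
      have huv : |(ranked (X + n • Z₀)).getD k 0 - (ranked (Y + n • Z₀)).getD k 0| ≤ 2 * M := by
        calc |(ranked (X + n • Z₀)).getD k 0 - (ranked (Y + n • Z₀)).getD k 0|
            ≤ |(ranked (X + n • Z₀)).getD k 0| + |(ranked (Y + n • Z₀)).getD k 0| :=
              abs_sub _ _
          _ ≤ M + M := add_le_add (hMu k) (hMv k)
          _ = 2 * M := by ring
      exact mul_le_mul hg2 huv (abs_nonneg _) (hgnn n)
    · rw [nsmul_eq_mul]
      apply mul_le_mul_of_nonneg_right
      · calc (E.card : ℝ) ≤ ((J * A : ℕ) : ℝ) := by exact_mod_cast hEcard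
          _ = (J : ℝ) * (A : ℝ) := by push_cast; ring
      · have := hgnn n; positivity
  -- bounds on the tails
  have hnnm : n ≤ n * psize Z₀ := by
    calc n = n * 1 := (Nat.mul_one n).symm
      _ ≤ n * psize Z₀ := Nat.mul_le_mul_left n hm1
  have hT1 : |∑ k ∈ Finset.Ico (n * psize Z₀) (psize X + n * psize Z₀),
      g (k + 1) * (ranked (X + n • Z₀)).getD k 0| ≤ (psize X : ℝ) * (g n * M) := by
    refine le_trans (Finset.abs_sum_le_sum_abs _ _) ?_
    refine le_trans (Finset.sum_le_card_nsmul _ _ (g n * M) ?_) ?_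
    · intro k hk
      have hk1 : n * psize Z₀ ≤ k := (Finset.mem_Ico.mp hk).1
      rw [abs_mul, abs_of_nonneg (hgnn _)]
      exact mul_le_mul (hganti n (k + 1) (by omega)) (hMu k) (abs_nonneg _) (hgnn n)
    · rw [nsmul_eq_mul, Nat.card_Ico, Nat.add_sub_cancel]
  have hT2 : |∑ k ∈ Finset.Ico (n * psize Z₀) (psize Y + n * psize Z₀),
      g (k + 1) * (ranked (Y + n • Z₀)).getD k 0| ≤ (psize Y : ℝ) * (g n * M) := by
    refine le_trans (Finset.abs_sum_le_sum_abs _ _) ?_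
    refine le_trans (Finset.sum_le_card_nsmul _ _ (g n * M) ?_) ?_
    · intro k hk
      have hk1 : n * psize Z₀ ≤ k := (Finset.mem_Ico.mp hk).1
      rw [abs_mul, abs_of_nonneg (hgnn _)]
      exact mul_le_mul (hganti n (k + 1) (by omega)) (hMv k) (abs_nonneg _) (hgnn n)
    · rw [nsmul_eq_mul, Nat.card_Ico, Nat.add_sub_cancel]
  -- master identity
  have hsplitX : ∑ k ∈ Finset.range (psize X + n * psize Z₀),
      g (k + 1) * (ranked (X + n • Z₀)).getD k 0
      = (∑ k ∈ Finset.range (n * psize Z₀), g (k + 1) * (ranked (X + n • Z₀)).getD k 0)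
        + ∑ k ∈ Finset.Ico (n * psize Z₀) (psize X + n * psize Z₀),
            g (k + 1) * (ranked (X + n • Z₀)).getD k 0 := by
    rw [Finset.range_eq_Ico, Finset.range_eq_Ico]
    exact (Finset.sum_Ico_consecutive _ (Nat.zero_le _) (Nat.le_add_left _ _)).symm
  have hsplitY : ∑ k ∈ Finset.range (psize Y + n * psize Z₀),
      g (k + 1) * (ranked (Y + n • Z₀)).getD k 0
      = (∑ k ∈ Finset.range (n * psize Z₀), g (k + 1) * (ranked (Y + n • Z₀)).getD k 0)
        + ∑ k ∈ Finset.Ico (n * psize Z₀) (psize Y + n * psize Z₀),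
            g (k + 1) * (ranked (Y + n • Z₀)).getD k 0 := by
    rw [Finset.range_eq_Ico, Finset.range_eq_Ico]
    exact (Finset.sum_Ico_consecutive _ (Nat.zero_le _) (Nat.le_add_left _ _)).symm
  have hdiff : ∑ k ∈ Finset.range (n * psize Z₀),
      g (k + 1) * ((ranked (X + n • Z₀)).getD k 0 - (ranked (Y + n • Z₀)).getD k 0)
      = (∑ k ∈ Finset.range (n * psize Z₀), g (k + 1) * (ranked (X + n • Z₀)).getD k 0)
        - ∑ k ∈ Finset.range (n * psize Z₀), g (k + 1) * (ranked (Y + n • Z₀)).getD k 0 := by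
    rw [← Finset.sum_sub_distrib]
    apply Finset.sum_congr rfl
    intro k _
    ring
  have hmaster : vrd f (X + n • Z₀) - vrd f (Y + n • Z₀)
      = L * (ptot X - ptot Y)
        + ((∑ k ∈ Finset.range (n * psize Z₀),
            g (k + 1) * ((ranked (X + n • Z₀)).getD k 0 - (ranked (Y + n • Z₀)).getD k 0))
          + (∑ k ∈ Finset.Ico (n * psize Z₀) (psize X + n * psize Z₀),
              g (k + 1) * (ranked (X + n • Z₀)).getD k 0)
          - ∑ k ∈ Finset.Ico (n * psize Z₀) (psize Y + n * psize Z₀),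
              g (k + 1) * (ranked (Y + n • Z₀)).getD k 0) := by
    rw [hvrd (X + n • Z₀), hvrd (Y + n • Z₀), hlenu, hlenv, ptot_add_nsmul, ptot_add_nsmul,
      hsplitX, hsplitY, hdiff]
    ring
  -- final arithmetic
  have hRb : ((J : ℝ) * (A : ℝ)) * (g n * (2 * M)) + (psize X : ℝ) * (g n * M)
      + (psize Y : ℝ) * (g n * M) = g n * C := by
    rw [hC]
    have hAc : (A : ℝ) = (psize X : ℝ) + (psize Y : ℝ) := by rw [hA]; push_cast; ring
    rw [hAc]
    ring
  have hfin1 : g n * C < L * (ptot X - ptot Y) := by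
    have h1 : g n * C ≤ ε * C := mul_le_mul_of_nonneg_right (le_of_lt hgn) hC0
    have h2 : ε * C < ε * (C + 1) := by nlinarith
    have h3 : ε * (C + 1) = L * (ptot X - ptot Y) := by
      rw [hε, div_mul_cancel₀]
      positivity
    linarith
  have habs1 := neg_abs_le (∑ k ∈ Finset.range (n * psize Z₀),
    g (k + 1) * ((ranked (X + n • Z₀)).getD k 0 - (ranked (Y + n • Z₀)).getD k 0))
  have habs2 := neg_abs_le (∑ k ∈ Finset.Ico (n * psize Z₀) (psize X + n * psize Z₀),
    g (k + 1) * (ranked (X + n • Z₀)).getD k 0)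
  have habs3 := le_abs_self (∑ k ∈ Finset.Ico (n * psize Z₀) (psize Y + n * psize Z₀),
    g (k + 1) * (ranked (Y + n • Z₀)).getD k 0)
  have : vrd f (X + n • Z₀) - vrd f (Y + n • Z₀) > 0 := by
    rw [hmaster]
    linarith
  linarith
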